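/- Let p be a positive Bernoulli distribution on {0,1}, let S ⊆ {0,1}* be a strategy, let a ∈ {0,1}, and let b, ε be real numbers with 0 < b ≤ 1 and ε > 0. Define H_n(b,ε) = { w ∈ {0,1}^n : |S(w)| > bn and | p(a) − #_a(S(w))/|S(w)| | ≥ ε }. Then μ_p(H_n(b,ε)) tends to 0 as n → ∞. -/

import Mathlib

open Filter
open scoped Classical

/-- `μ_p(w)`: the probability of the finite word `w` under the Bernoulli distribution `p`. -/
def wordProb (p : Bool → ℝ) (w : List Bool) : ℝ := (w.map p).prod

/-- The word selected from `w` by the strategy `S ⊆ {0,1}*`: the symbols `w_j` (in order)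
such that the prefix `w_1 … w_(j-1)` belongs to `S`. -/
noncomputable def selectWord (S : Set (List Bool)) (w : List Bool) : List Bool :=
  (List.finRange w.length).filterMap fun (j : Fin w.length) =>
    if w.take (j : ℕ) ∈ S then some (w.get j) else none

lemma selectWord_nil (S : Set (List Bool)) : selectWord S [] = [] := by
  simp [selectWord]

lemma selectWord_cons (S : Set (List Bool)) (c : Bool) (v : List Bool) :
    selectWord S (c :: v) =
      (if [] ∈ S then [c] else []) ++ selectWord {x | c :: x ∈ S} v := by
  unfold selectWord
  have key : List.filterMap
      ((fun (j : Fin (c :: v).length) =>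
        if (c :: v).take (j : ℕ) ∈ S then some ((c :: v).get j) else none) ∘ Fin.succ)
      (List.finRange v.length)
      = List.filterMap (fun (j : Fin v.length) =>
        if v.take (j : ℕ) ∈ {x | c :: x ∈ S} then some (v.get j) else none)
      (List.finRange v.length) := by
    apply List.filterMap_congr
    intro j _
    simp [Function.comp, List.take_succ_cons, Set.mem_setOf_eq]
    exact if_congr Iff.rfl rfl rfl
  rw [show (List.finRange (c :: v).length) = List.finRange (v.length + 1) from rfl,
    List.finRange_succ, List.filterMap_cons, List.filterMap_map, key]
  by_cases h0 : ([] : List Bool) ∈ S <;> simp [h0]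

-- basic wordProb lemmas
lemma wordProb_nil (p : Bool → ℝ) : wordProb p [] = 1 := rfl
lemma wordProb_cons (p : Bool → ℝ) (c : Bool) (v : List Bool) :
    wordProb p (c :: v) = p c * wordProb p v := by simp [wordProb]
lemma wordProb_nonneg {p : Bool → ℝ} (hp : ∀ a, 0 < p a) (v : List Bool) :
    0 ≤ wordProb p v := by
  induction v with
  | nil => norm_num [wordProb_nil]
  | cons c v ih => rw [wordProb_cons]; exact mul_nonneg (hp c).le ih

noncomputable def phi (p : Bool → ℝ) (s u : List Bool) : ℝ :=
  if u <+: s then 1 else if s <+: u then wordProb p (u.drop s.length) else 0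

lemma phi_nil_left (p : Bool → ℝ) (u : List Bool) : phi p [] u = wordProb p u := by
  unfold phi
  rcases u with _ | ⟨d, u'⟩
  · simp [wordProb_nil]
  · have : ¬ (d :: u' <+: ([]:List Bool)) := by simp
    simp [this, List.nil_prefix]

lemma phi_nil_right (p : Bool → ℝ) (s : List Bool) : phi p s [] = 1 := by
  simp [phi, List.nil_prefix]

lemma phi_nonneg {p : Bool → ℝ} (hp : ∀ a, 0 < p a) (s u : List Bool) : 0 ≤ phi p s u := by
  unfold phi
  split_ifs with h1 h2
  · norm_num
  · exact wordProb_nonneg hp _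
  · norm_num

lemma indicator_le_phi {p : Bool → ℝ} (hp : ∀ a, 0 < p a) (s u : List Bool) :
    (if u <+: s then (1:ℝ) else 0) ≤ phi p s u := by
  unfold phi
  split_ifs with h1 h2
  · norm_num
  · exact wordProb_nonneg hp _
  · norm_num

lemma phi_cons_cons (p : Bool → ℝ) (c d : Bool) (s u : List Bool) :
    phi p (c :: s) (d :: u) = if d = c then phi p s u else 0 := by
  unfold phi
  by_cases hdc : d = c
  · subst hdc
    simp only [List.cons_prefix_cons, true_and, if_pos rfl]
    simp [List.length_cons]
  · simp [List.cons_prefix_cons, hdc, Ne.symm hdc]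

lemma ofFn_cons (n : ℕ) (c : Bool) (w : Fin n → Bool) :
    List.ofFn (Fin.cons c w) = c :: List.ofFn w := by
  rw [List.ofFn_succ]; simp

lemma sum_cons_decomp {M : Type*} [AddCommMonoid M] (n : ℕ) (f : (Fin (n+1) → Bool) → M) :
    ∑ w : Fin (n+1) → Bool, f w = ∑ c : Bool, ∑ w : Fin n → Bool, f (Fin.cons c w) := by
  rw [← (Fin.consEquiv (fun _ => Bool)).sum_comp f, Fintype.sum_prod_type]
  rfl

lemma sum_wordProb_phi {p : Bool → ℝ} (hsum : p false + p true = 1) :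
    ∀ (n : ℕ) (S : Set (List Bool)) (u : List Bool),
    ∑ w : Fin n → Bool, wordProb p (List.ofFn w) * phi p (selectWord S (List.ofFn w)) u
      = wordProb p u := by
  intro n
  induction n with
  | zero =>
    intro S u
    rw [Fintype.sum_eq_single (fun i => i.elim0) (fun w hw => absurd (funext fun i => i.elim0) hw)]
    simp only [List.ofFn_zero, selectWord_nil, wordProb_nil, one_mul, phi_nil_left]
  | succ n ih =>
    intro S u
    rw [sum_cons_decomp]
    have hstep : ∀ c : Bool, ∀ w : Fin n → Bool,
        wordProb p (List.ofFn (Fin.cons c w)) * phi p (selectWord S (List.ofFn (Fin.cons c w))) u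
        = p c * (wordProb p (List.ofFn w) *
            phi p ((if [] ∈ S then [c] else []) ++ selectWord {x | c :: x ∈ S} (List.ofFn w)) u) := by
      intro c w
      rw [ofFn_cons, wordProb_cons, selectWord_cons]
      ring
    simp only [hstep]
    by_cases h0 : ([] : List Bool) ∈ S
    · simp only [h0, if_pos, List.singleton_append]
      rcases u with _ | ⟨d, u'⟩
      · simp only [phi_nil_right, mul_one, wordProb_nil]
        have : ∀ c : Bool, ∑ w : Fin n → Bool, p c * wordProb p (List.ofFn w) = p c := by
          intro c
          rw [← Finset.mul_sum]
          have h1 : ∑ w : Fin n → Bool, wordProb p (List.ofFn w) = 1 := by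
            have := ih {x | c :: x ∈ S} []
            simpa [phi_nil_right, wordProb_nil] using this
          rw [h1, mul_one]
        rw [Fintype.sum_bool]
        rw [this true, this false]
        linarith
    -- remaining cases below
      · simp only [phi_cons_cons]
        rw [Fintype.sum_bool]
        have key : ∀ c : Bool, ∑ w : Fin n → Bool, p c * (wordProb p (List.ofFn w) *
            phi p (selectWord {x | c :: x ∈ S} (List.ofFn w)) u') = p c * wordProb p u' := by
          intro c
          rw [← Finset.mul_sum, ih]
        rcases d with _ | _ <;>
          simp [mul_zero, Finset.sum_const_zero, key, wordProb_cons]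
    · simp only [h0, if_neg, not_false_iff, List.nil_append]
      have : ∀ c : Bool, ∑ w : Fin n → Bool, p c * (wordProb p (List.ofFn w) *
          phi p (selectWord {x | c :: x ∈ S} (List.ofFn w)) u) = p c * wordProb p u := by
        intro c
        rw [← Finset.mul_sum, ih]
      rw [Fintype.sum_bool, this true, this false, ← add_mul,
        show p true + p false = 1 by linarith, one_mul]

lemma sum_sel_prefix_le {p : Bool → ℝ} (hpos : ∀ a, 0 < p a) (hsum : p false + p true = 1)
    (n : ℕ) (S : Set (List Bool)) (u : List Bool) :
    ∑ w : Fin n → Bool,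
      (if u <+: selectWord S (List.ofFn w) then wordProb p (List.ofFn w) else 0)
      ≤ wordProb p u := by
  rw [← sum_wordProb_phi hsum n S u]
  apply Finset.sum_le_sum
  intro w _
  have h1 := indicator_le_phi hpos (selectWord S (List.ofFn w)) u
  have h2 := wordProb_nonneg hpos (List.ofFn w)
  split_ifs with h
  · rw [if_pos h] at h1
    nlinarith [phi_nonneg hpos (selectWord S (List.ofFn w)) u]
  · exact mul_nonneg h2 (phi_nonneg hpos _ u)

section Moments
variable {p : Bool → ℝ} (a : Bool)

/-- centered indicator -/
noncomputable def Yc (p : Bool → ℝ) (a : Bool) (c : Bool) : ℝ :=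
  (if c = a then 1 else 0) - p a

/-- centered count of `a` in a word -/
noncomputable def Gc (p : Bool → ℝ) (a : Bool) (v : List Bool) : ℝ :=
  (v.count a : ℝ) - p a * v.length

lemma Gc_nil : Gc p a [] = 0 := by simp [Gc]

lemma Gc_cons (c : Bool) (v : List Bool) : Gc p a (c :: v) = Yc p a c + Gc p a v := by
  rcases eq_or_ne c a with h | h
  · subst h
    simp [Gc, Yc, List.count_cons, List.length_cons]
    ring
  · have : (c == a) = false := by simp [h]
    simp [Gc, Yc, List.count_cons, List.length_cons, this, h]
    ring

lemma EY_zero (hsum : p false + p true = 1) : ∑ c : Bool, p c * Yc p a c = 0 := by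
  rw [Fintype.sum_bool]
  have ht : p true = 1 - p false := by linarith
  rcases a with _ | _ <;> simp [Yc] <;> rw [ht] <;> ring

lemma EY2_le (hpos : ∀ a, 0 < p a) (hsum : p false + p true = 1) :
    ∑ c : Bool, p c * (Yc p a c)^2 ≤ 1/4 := by
  rw [Fintype.sum_bool]
  have ht : p true = 1 - p false := by linarith
  rcases a with _ | _ <;> simp [Yc] <;> rw [ht] <;>
    nlinarith [sq_nonneg (p false - 1/2)]

lemma EY2_nonneg (hpos : ∀ a, 0 < p a) : 0 ≤ ∑ c : Bool, p c * (Yc p a c)^2 := by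
  apply Finset.sum_nonneg
  intro c _
  exact mul_nonneg (hpos c).le (sq_nonneg _)

lemma EY4_le (hpos : ∀ a, 0 < p a) (hsum : p false + p true = 1) :
    ∑ c : Bool, p c * (Yc p a c)^4 ≤ 1 := by
  rw [Fintype.sum_bool]
  have ht : p true = 1 - p false := by linarith
  have h0 := hpos false
  have h1 := hpos true
  have hf1 : p false < 1 := by linarith
  have ht1 : p true < 1 := by linarith
  have e1 : p false ^ 4 ≤ 1 := pow_le_one₀ h0.le hf1.le
  have e2 : p true ^ 4 ≤ 1 := pow_le_one₀ h1.le ht1.le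
  have e3 : (1 - p false) ^ 4 ≤ 1 := pow_le_one₀ (by linarith) (by linarith)
  have e4 : (1 - p true) ^ 4 ≤ 1 := pow_le_one₀ (by linarith) (by linarith)
  rcases a with _ | _ <;> simp [Yc] <;> rw [ht] <;> nlinarith

end Moments

lemma moments_bound {p : Bool → ℝ} (hpos : ∀ a, 0 < p a) (hsum : p false + p true = 1)
    (a : Bool) : ∀ m : ℕ,
    (∑ u : Fin m → Bool, wordProb p (List.ofFn u)) = 1 ∧
    (∑ u : Fin m → Bool, wordProb p (List.ofFn u) * Gc p a (List.ofFn u)) = 0 ∧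
    (∑ u : Fin m → Bool, wordProb p (List.ofFn u) * (Gc p a (List.ofFn u))^2) ≤ m/4 ∧
    (∑ u : Fin m → Bool, wordProb p (List.ofFn u) * (Gc p a (List.ofFn u))^4) ≤ (m:ℝ)^2 := by
  have hA0 : ∑ c : Bool, p c = 1 := by rw [Fintype.sum_bool]; linarith
  have hA1 : ∑ c : Bool, p c * Yc p a c = 0 := EY_zero a hsum
  have hA2 : ∑ c : Bool, p c * (Yc p a c)^2 ≤ 1/4 := EY2_le a hpos hsum
  have hA2' : 0 ≤ ∑ c : Bool, p c * (Yc p a c)^2 := EY2_nonneg a hpos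
  have hA4 : ∑ c : Bool, p c * (Yc p a c)^4 ≤ 1 := EY4_le a hpos hsum
  intro m
  induction m with
  | zero =>
    have hs : ∀ (f : (Fin 0 → Bool) → ℝ), (∑ u : Fin 0 → Bool, f u) = f (fun i => i.elim0) :=
      fun f => Fintype.sum_eq_single _ (fun w hw => absurd (funext fun i => i.elim0) hw)
    refine ⟨?_, ?_, ?_, ?_⟩ <;>
      simp [hs, List.ofFn_zero, wordProb_nil, Gc_nil]
  | succ m ih =>
    obtain ⟨hB0, hB1, hB2, hB4⟩ := ih
    have hB2' : 0 ≤ ∑ u : Fin m → Bool, wordProb p (List.ofFn u) * (Gc p a (List.ofFn u))^2 :=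
      Finset.sum_nonneg fun u _ => mul_nonneg (wordProb_nonneg hpos _) (sq_nonneg _)
    have hfac : ∀ (f : Bool → ℝ) (g : (Fin m → Bool) → ℝ),
        (∑ c : Bool, ∑ u : Fin m → Bool, f c * g u)
          = (∑ c : Bool, f c) * (∑ u : Fin m → Bool, g u) :=
      fun f g => (Finset.sum_mul_sum _ _ f g).symm
    constructor
    · rw [sum_cons_decomp]
      simp only [ofFn_cons, wordProb_cons]
      rw [hfac (fun c => p c) (fun u => wordProb p (List.ofFn u)), hA0, hB0, mul_one]
    constructor
    · rw [sum_cons_decomp]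
      simp only [ofFn_cons, wordProb_cons, Gc_cons]
      have : ∀ c : Bool, ∀ u : Fin m → Bool,
          p c * wordProb p (List.ofFn u) * (Yc p a c + Gc p a (List.ofFn u))
          = (p c * Yc p a c) * wordProb p (List.ofFn u)
            + p c * (wordProb p (List.ofFn u) * Gc p a (List.ofFn u)) := by
        intro c u; ring
      simp only [this, Finset.sum_add_distrib]
      rw [hfac (fun c => p c * Yc p a c) (fun u => wordProb p (List.ofFn u)),
        hfac (fun c => p c) (fun u => wordProb p (List.ofFn u) * Gc p a (List.ofFn u)),
        hA1, hB1]
      ring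
    constructor
    · rw [sum_cons_decomp]
      simp only [ofFn_cons, wordProb_cons, Gc_cons]
      have : ∀ c : Bool, ∀ u : Fin m → Bool,
          p c * wordProb p (List.ofFn u) * (Yc p a c + Gc p a (List.ofFn u))^2
          = (p c * (Yc p a c)^2) * wordProb p (List.ofFn u)
            + (2 * (p c * Yc p a c)) * (wordProb p (List.ofFn u) * Gc p a (List.ofFn u))
            + p c * (wordProb p (List.ofFn u) * (Gc p a (List.ofFn u))^2) := by
        intro c u; ring
      simp only [this, Finset.sum_add_distrib]
      rw [hfac (fun c => p c * (Yc p a c)^2) (fun u => wordProb p (List.ofFn u)),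
        hfac (fun c => 2 * (p c * Yc p a c))
          (fun u => wordProb p (List.ofFn u) * Gc p a (List.ofFn u)),
        hfac (fun c => p c) (fun u => wordProb p (List.ofFn u) * (Gc p a (List.ofFn u))^2),
        hB0, hB1, hA0, mul_one, mul_zero, one_mul]
      push_cast
      linarith
    · rw [sum_cons_decomp]
      simp only [ofFn_cons, wordProb_cons, Gc_cons]
      have : ∀ c : Bool, ∀ u : Fin m → Bool,
          p c * wordProb p (List.ofFn u) * (Yc p a c + Gc p a (List.ofFn u))^4
          = (p c * (Yc p a c)^4) * wordProb p (List.ofFn u)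
            + (4 * (p c * (Yc p a c)^3)) * (wordProb p (List.ofFn u) * Gc p a (List.ofFn u))
            + (6 * (p c * (Yc p a c)^2)) * (wordProb p (List.ofFn u) * (Gc p a (List.ofFn u))^2)
            + (4 * (p c * Yc p a c)) * (wordProb p (List.ofFn u) * (Gc p a (List.ofFn u))^3)
            + p c * (wordProb p (List.ofFn u) * (Gc p a (List.ofFn u))^4) := by
        intro c u; ring
      simp only [this, Finset.sum_add_distrib]
      rw [hfac (fun c => p c * (Yc p a c)^4) (fun u => wordProb p (List.ofFn u)),
        hfac (fun c => 4 * (p c * (Yc p a c)^3))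
          (fun u => wordProb p (List.ofFn u) * Gc p a (List.ofFn u)),
        hfac (fun c => 6 * (p c * (Yc p a c)^2))
          (fun u => wordProb p (List.ofFn u) * (Gc p a (List.ofFn u))^2),
        hfac (fun c => 4 * (p c * Yc p a c))
          (fun u => wordProb p (List.ofFn u) * (Gc p a (List.ofFn u))^3),
        hfac (fun c => p c) (fun u => wordProb p (List.ofFn u) * (Gc p a (List.ofFn u))^4),
        hB0, hB1, hA0, mul_one, mul_zero, one_mul]
      have h6 : (∑ c : Bool, 6 * (p c * (Yc p a c)^2))
          * (∑ u : Fin m → Bool, wordProb p (List.ofFn u) * (Gc p a (List.ofFn u))^2)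
          ≤ 6 * (1/4) * (m/4) := by
        rw [← Finset.mul_sum]
        have := mul_le_mul (by linarith : (6:ℝ) * (∑ c : Bool, p c * (Yc p a c)^2) ≤ 6 * (1/4))
          hB2 hB2' (by norm_num)
        linarith
      have h41 : (∑ c : Bool, 4 * (p c * Yc p a c)) = 0 := by
        rw [← Finset.mul_sum, hA1, mul_zero]
      rw [h41, zero_mul]
      push_cast
      nlinarith [Nat.cast_nonneg (α := ℝ) m]

lemma dev_sum_le {p : Bool → ℝ} (hpos : ∀ a, 0 < p a) (hsum : p false + p true = 1)
    (a : Bool) {ε : ℝ} (hε : 0 < ε) (m : ℕ) (hm : 1 ≤ m) :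
    ∑ u : Fin m → Bool,
      (if ε ≤ |p a - ((List.ofFn u).count a : ℝ) / (m : ℝ)| then wordProb p (List.ofFn u) else 0)
      ≤ 1 / (ε^4 * (m:ℝ)^2) := by
  have hm0 : (0:ℝ) < m := by exact_mod_cast hm
  have hεm : (0:ℝ) < ε^4 * (m:ℝ)^4 := by positivity
  have hT := (moments_bound hpos hsum a m).2.2.2
  have key : ∀ u : Fin m → Bool,
      (if ε ≤ |p a - ((List.ofFn u).count a : ℝ) / (m : ℝ)| then wordProb p (List.ofFn u) else 0)
      ≤ wordProb p (List.ofFn u) * (Gc p a (List.ofFn u))^4 * (ε^4 * (m:ℝ)^4)⁻¹ := by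
    intro u
    have hμ := wordProb_nonneg hpos (List.ofFn u)
    have hg4 : (0:ℝ) ≤ (Gc p a (List.ofFn u))^4 := by positivity
    split_ifs with h
    · have hGc : Gc p a (List.ofFn u) = ((List.ofFn u).count a : ℝ) - p a * m := by
        rw [Gc]; simp
      have habs : |p a - ((List.ofFn u).count a : ℝ) / (m : ℝ)|
          = |Gc p a (List.ofFn u)| / m := by
        rw [hGc, show p a - ((List.ofFn u).count a : ℝ) / (m : ℝ)
            = -((((List.ofFn u).count a : ℝ) - p a * m) / m) by field_simp; ring,
          abs_neg, abs_div, abs_of_pos hm0]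
      rw [habs, le_div_iff₀ hm0] at h
      have h2 : (ε * m)^4 ≤ (Gc p a (List.ofFn u))^4 := by
        calc (ε * m)^4 ≤ |Gc p a (List.ofFn u)|^4 := pow_le_pow_left₀ (by positivity) h 4
          _ = (Gc p a (List.ofFn u))^4 := by rw [pow_abs, abs_of_nonneg hg4]
      have h2' : ε^4 * (m:ℝ)^4 ≤ (Gc p a (List.ofFn u))^4 := by rw [← mul_pow]; exact h2
      have h3 := mul_le_mul_of_nonneg_right h2' (inv_nonneg.mpr hεm.le)
      rw [mul_inv_cancel₀ hεm.ne'] at h3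
      calc wordProb p (List.ofFn u) = wordProb p (List.ofFn u) * 1 := (mul_one _).symm
        _ ≤ wordProb p (List.ofFn u) * ((Gc p a (List.ofFn u))^4 * (ε^4*(m:ℝ)^4)⁻¹) :=
            mul_le_mul_of_nonneg_left h3 hμ
        _ = wordProb p (List.ofFn u) * (Gc p a (List.ofFn u))^4 * (ε^4*(m:ℝ)^4)⁻¹ := by ring
    · have := wordProb_nonneg hpos (List.ofFn u)
      positivity
  have hmne : (m:ℝ) ≠ 0 := hm0.ne'
  have hεne : ε ≠ 0 := hε.ne'
  calc ∑ u : Fin m → Bool,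
      (if ε ≤ |p a - ((List.ofFn u).count a : ℝ) / (m : ℝ)| then wordProb p (List.ofFn u) else 0)
      ≤ ∑ u : Fin m → Bool,
        wordProb p (List.ofFn u) * (Gc p a (List.ofFn u))^4 * (ε^4 * (m:ℝ)^4)⁻¹ :=
        Finset.sum_le_sum fun u _ => key u
    _ = (∑ u : Fin m → Bool, wordProb p (List.ofFn u) * (Gc p a (List.ofFn u))^4)
          * (ε^4 * (m:ℝ)^4)⁻¹ := by rw [← Finset.sum_mul]
    _ ≤ (m:ℝ)^2 * (ε^4 * (m:ℝ)^4)⁻¹ := mul_le_mul_of_nonneg_right hT (by positivity)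
    _ = 1 / (ε^4 * (m:ℝ)^2) := by field_simp

lemma selectWord_length_le (S : Set (List Bool)) (v : List Bool) :
    (selectWord S v).length ≤ v.length := by
  unfold selectWord
  simpa using List.length_filterMap_le _ (List.finRange v.length)

lemma ite_and_sum {ι : Type*} [Fintype ι] (P : Prop) [Decidable P]
    (Q : ι → Prop) [DecidablePred Q] (f : ι → ℝ) :
    (∑ w : ι, if P ∧ Q w then f w else 0) = if P then (∑ w : ι, if Q w then f w else 0) else 0 := by
  split_ifs with h
  · exact Finset.sum_congr rfl fun w _ => by simp [h]
  · exact Finset.sum_eq_zero fun w _ => by simp [h]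

/-- For `H_n(b,ε) = {w ∈ {0,1}^n : |S(w)| > b·n and |p(a) - #_a(S(w))/|S(w)|| ≥ ε}`, we have
`μ_p(H_n(b,ε)) → 0` as `n → ∞`. -/
theorem mu_H_tendsto_zero (p : Bool → ℝ) (hpos : ∀ a, 0 < p a)
    (hsum : p false + p true = 1)
    (S : Set (List Bool)) (a : Bool) (b ε : ℝ) (hb0 : 0 < b) (hb1 : b ≤ 1) (hε : 0 < ε) :
    Tendsto (fun n : ℕ =>
      ∑ w : Fin n → Bool,
        if (b * n < ((selectWord S (List.ofFn w)).length : ℝ) ∧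
            ε ≤ |p a - ((selectWord S (List.ofFn w)).count a : ℝ) /
                  ((selectWord S (List.ofFn w)).length : ℝ)|)
        then wordProb p (List.ofFn w) else 0)
      atTop (nhds 0) := by
  set F : ℕ → ℝ := fun n =>
    ∑ w : Fin n → Bool,
      if (b * n < ((selectWord S (List.ofFn w)).length : ℝ) ∧
          ε ≤ |p a - ((selectWord S (List.ofFn w)).count a : ℝ) /
                ((selectWord S (List.ofFn w)).length : ℝ)|)
      then wordProb p (List.ofFn w) else 0 with hF
  have hF_nonneg : ∀ n, 0 ≤ F n := by
    intro n
    apply Finset.sum_nonneg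
    intro w _
    split_ifs
    · exact wordProb_nonneg hpos _
    · exact le_refl 0
  have hF_le : ∀ n : ℕ, 1 ≤ n → F n ≤ 2 / (ε^4 * b^2 * n) := by
    intro n hn
    have hn0 : (0:ℝ) < n := by exact_mod_cast hn
    have hbn : (0:ℝ) < b * n := by positivity
    -- the triple sum
    set s : (m : ℕ) → (Fin m → Bool) → (Fin n → Bool) → ℝ := fun m u w =>
      if ((b * n < (m:ℝ) ∧ ε ≤ |p a - ((List.ofFn u).count a : ℝ) / (m : ℝ)|) ∧
          List.ofFn u <+: selectWord S (List.ofFn w))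
      then wordProb p (List.ofFn w) else 0 with hs
    have hs_nonneg : ∀ m u w, 0 ≤ s m u w := by
      intro m u w
      simp only [hs]
      split_ifs
      · exact wordProb_nonneg hpos _
      · exact le_refl 0
    -- Step A
    have stepA : F n ≤ ∑ m ∈ Finset.range (n+1), ∑ u : Fin m → Bool,
        ∑ w : Fin n → Bool, s m u w := by
      have swap : (∑ m ∈ Finset.range (n+1), ∑ u : Fin m → Bool, ∑ w : Fin n → Bool, s m u w)
          = ∑ w : Fin n → Bool, ∑ m ∈ Finset.range (n+1), ∑ u : Fin m → Bool, s m u w := by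
        rw [Finset.sum_comm]
        exact Finset.sum_congr rfl fun m _ => Finset.sum_comm
      rw [swap, hF]
      apply Finset.sum_le_sum
      intro w _
      split_ifs with hcond
      · -- pick m₀, u₀
        obtain ⟨l, hl⟩ : ∃ l, selectWord S (List.ofFn w) = l := ⟨_, rfl⟩
        rw [hl] at hcond
        have hofn : List.ofFn l.get = l := List.ofFn_get l
        have hmem : l.length ∈ Finset.range (n+1) := by
          rw [Finset.mem_range]
          have h1 : l.length ≤ (List.ofFn w).length := hl ▸ selectWord_length_le S _
          simpa using Nat.lt_succ_of_le (by simpa using h1)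
        have hterm : s l.length l.get w = wordProb p (List.ofFn w) := by
          simp only [hs]
          rw [if_pos]
          refine ⟨⟨?_, ?_⟩, ?_⟩
          · exact hcond.1
          · rw [hofn]; exact hcond.2
          · rw [hofn, hl]
        calc wordProb p (List.ofFn w) = s l.length l.get w := hterm.symm
          _ ≤ ∑ u : Fin l.length → Bool, s l.length u w :=
              Finset.single_le_sum (fun u _ => hs_nonneg _ u w) (Finset.mem_univ _)
          _ ≤ ∑ m ∈ Finset.range (n+1), ∑ u : Fin m → Bool, s m u w :=
              Finset.single_le_sum (f := fun m => ∑ u : Fin m → Bool, s m u w)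
                (fun m _ => Finset.sum_nonneg fun u _ => hs_nonneg m u w) hmem
      · exact Finset.sum_nonneg fun m _ => Finset.sum_nonneg fun u _ => hs_nonneg m u w
    -- Step B
    have stepB : ∀ m ∈ Finset.range (n+1),
        (∑ u : Fin m → Bool, ∑ w : Fin n → Bool, s m u w) ≤ (ε^4 * b^2 * (n:ℝ)^2)⁻¹ := by
      intro m _
      simp only [hs, ite_and_sum]
      by_cases hbm : b * n < (m:ℝ)
      · rw [if_pos hbm]
        have hm1 : 1 ≤ m := by
          by_contra hm
          push_neg at hm
          interval_cases m
          · simp at hbm; linarith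
        have step1 : (∑ u : Fin m → Bool,
            if ε ≤ |p a - ((List.ofFn u).count a : ℝ) / (m : ℝ)|
            then (∑ w : Fin n → Bool,
              if List.ofFn u <+: selectWord S (List.ofFn w) then wordProb p (List.ofFn w) else 0)
            else 0)
            ≤ ∑ u : Fin m → Bool,
              (if ε ≤ |p a - ((List.ofFn u).count a : ℝ) / (m : ℝ)|
                then wordProb p (List.ofFn u) else 0) := by
          apply Finset.sum_le_sum
          intro u _
          split_ifs with h1
          · exact sum_sel_prefix_le hpos hsum n S (List.ofFn u)
          · exact le_refl 0
        have step2 := dev_sum_le hpos hsum a hε m hm1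
        have step3 : 1 / (ε^4 * (m:ℝ)^2) ≤ (ε^4 * b^2 * (n:ℝ)^2)⁻¹ := by
          rw [one_div]
          apply inv_anti₀
          · positivity
          · have hle : b * n ≤ (m:ℝ) := hbm.le
            have h1 : (b*(n:ℝ))^2 ≤ (m:ℝ)^2 := pow_le_pow_left₀ hbn.le hle 2
            nlinarith [mul_le_mul_of_nonneg_left h1 (le_of_lt (pow_pos hε 4))]
        calc _ ≤ _ := step1
          _ ≤ 1 / (ε^4 * (m:ℝ)^2) := step2
          _ ≤ (ε^4 * b^2 * (n:ℝ)^2)⁻¹ := step3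
      · rw [if_neg hbm]
        positivity
    calc F n ≤ ∑ m ∈ Finset.range (n+1), ∑ u : Fin m → Bool, ∑ w : Fin n → Bool, s m u w :=
          stepA
      _ ≤ ∑ m ∈ Finset.range (n+1), (ε^4 * b^2 * (n:ℝ)^2)⁻¹ := Finset.sum_le_sum stepB
      _ = ((n:ℝ)+1) * (ε^4 * b^2 * (n:ℝ)^2)⁻¹ := by
          rw [Finset.sum_const, Finset.card_range, nsmul_eq_mul]
          push_cast
          ring
      _ ≤ (2*(n:ℝ)) * (ε^4 * b^2 * (n:ℝ)^2)⁻¹ := by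
          have hn1 : (1:ℝ) ≤ n := by exact_mod_cast hn
          apply mul_le_mul_of_nonneg_right (by linarith) (by positivity)
      _ = 2 / (ε^4 * b^2 * n) := by
          field_simp
  -- squeeze
  have hg : Tendsto (fun n : ℕ => 2 / (ε^4 * b^2 * n)) atTop (nhds 0) := by
    have h1 : Tendsto (fun n : ℕ => (2 / (ε^4 * b^2)) * ((n:ℝ))⁻¹) atTop (nhds 0) := by
      have := (tendsto_inv_atTop_nhds_zero_nat (𝕜 := ℝ)).const_mul (2 / (ε^4 * b^2))
      simpa using this
    refine h1.congr fun n => ?_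
    rw [div_mul_eq_mul_div, mul_comm]
    by_cases hn : n = 0
    · subst hn; simp
    · have hne : (n:ℝ) ≠ 0 := Nat.cast_ne_zero.mpr hn
      field_simp
  exact squeeze_zero' (Filter.Eventually.of_forall hF_nonneg)
    (Filter.eventually_atTop.mpr ⟨1, fun n hn => hF_le n hn⟩) hg
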